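/- Let (X_n) be a stochastic process adapted to a filtration (F_n) taking values in ℝ^d, let V : ℝ^d → ℝ be nonnegative, and let φ : ℝ^d → ℝ be nonnegative and continuous. Fix an integer T ≥ 1 and suppose E[V(X_{n+T}) | F_n] ≤ V(X_n) − φ(X_n) almost surely for all n. Then φ(X_n) → 0 almost surely as n → ∞. -/

import Mathlib

open MeasureTheory Filter

theorem finite_step_lyapunov_deterministic
    {Ω : Type*} {m0 : MeasurableSpace Ω} {μ : Measure Ω} [IsProbabilityMeasure μ]
    (ℱ : Filtration ℕ m0) {d : ℕ}
    (X : ℕ → Ω → (Fin d → ℝ)) (hadapted : Adapted ℱ X)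
    (V : (Fin d → ℝ) → ℝ) (hVnonneg : ∀ x, 0 ≤ V x)
    (φ : (Fin d → ℝ) → ℝ) (hφcont : Continuous φ) (hφnonneg : ∀ x, 0 ≤ φ x)
    (T : ℕ) (hT : 1 ≤ T)
    (hVint : ∀ n, Integrable (fun ω => V (X n ω)) μ)
    (hdrift : ∀ n, ∀ᵐ ω ∂μ,
      (μ[fun ω' => V (X (n + T) ω') | ℱ n]) ω ≤ V (X n ω) - φ (X n ω)) :
    ∀ᵐ ω ∂μ, Tendsto (fun n => φ (X n ω)) atTop (nhds 0) := by
  haveI : NeZero T := ⟨by omega⟩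
  have hφsm : ∀ n, AEStronglyMeasurable (fun ω => φ (X n ω)) μ := fun n =>
    (hφcont.comp_stronglyMeasurable (((hadapted n).mono (ℱ.le n) le_rfl).stronglyMeasurable)).aestronglyMeasurable
  have hce : ∀ n, Integrable (μ[fun ω' => V (X (n + T) ω') | ℱ n]) μ := fun n =>
    integrable_condExp
  have hφint : ∀ n, Integrable (fun ω => φ (X n ω)) μ := by
    intro n
    refine ((hVint n).sub (hce n)).mono' (hφsm n) ?_
    filter_upwards [hdrift n] with ω h
    rw [Real.norm_eq_abs, abs_of_nonneg (hφnonneg _)]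
    simp only [Pi.sub_apply]; linarith
  set a : ℕ → ℝ := fun n => ∫ ω, φ (X n ω) ∂μ with ha
  set b : ℕ → ℝ := fun n => ∫ ω, V (X n ω) ∂μ with hb
  have hbnn : ∀ n, 0 ≤ b n := fun n => integral_nonneg fun ω => hVnonneg _
  have hann : ∀ n, 0 ≤ a n := fun n => integral_nonneg fun ω => hφnonneg _
  have key : ∀ n, a n ≤ b n - b (n + T) := by
    intro n
    have h1 : a n ≤ ∫ ω, (V (X n ω) - (μ[fun ω' => V (X (n + T) ω') | ℱ n]) ω) ∂μ := by
      refine integral_mono_ae (hφint n) ((hVint n).sub (hce n)) ?_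
      filter_upwards [hdrift n] with ω h
      linarith
    rw [integral_sub (hVint n) (hce n), integral_condExp (ℱ.le n)] at h1
    exact h1
  -- telescoping along each residue class
  have tel : ∀ k N, ∑ m ∈ Finset.range N, a (m * T + k) ≤ b k - b (N * T + k) := by
    intro k N
    induction N with
    | zero => simp
    | succ N ih =>
      rw [Finset.sum_range_succ]
      have h2 := key (N * T + k)
      have he : N * T + k + T = (N + 1) * T + k := by ring
      rw [he] at h2
      linarith
  have tel' : ∀ k N, ∑ m ∈ Finset.range N, a (m * T + k) ≤ b k := fun k N =>
    (tel k N).trans (by linarith [hbnn (N * T + k)])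
  -- pass to ENNReal
  have hsubsum : ∀ k : Fin T, ∑' m : ℕ, ENNReal.ofReal (a (m * T + k)) ≤ ENNReal.ofReal (b k) := by
    intro k
    refine Summable.tsum_le_of_sum_le ENNReal.summable ?_
    intro s
    obtain ⟨N, hN⟩ := s.exists_nat_subset_range
    calc ∑ m ∈ s, ENNReal.ofReal (a (m * T + k))
        ≤ ∑ m ∈ Finset.range N, ENNReal.ofReal (a (m * T + k)) :=
          Finset.sum_le_sum_of_subset_of_nonneg hN (fun _ _ _ => zero_le)
      _ = ENNReal.ofReal (∑ m ∈ Finset.range N, a (m * T + k)) :=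
          (ENNReal.ofReal_sum_of_nonneg fun m _ => hann _).symm
      _ ≤ ENNReal.ofReal (b k) := ENNReal.ofReal_le_ofReal (tel' k N)
  have hsum : ∑' n : ℕ, ENNReal.ofReal (a n) ≠ ⊤ := by
    have heq : ∑' n : ℕ, ENNReal.ofReal (a n)
        = ∑' p : ℕ × Fin T, ENNReal.ofReal (a (p.1 * T + (p.2 : ℕ))) := by
      rw [← (Nat.divModEquiv T).symm.tsum_eq (fun n => ENNReal.ofReal (a n))]
      rfl
    rw [heq, ENNReal.tsum_prod', ENNReal.tsum_comm]
    refine ne_top_of_le_ne_top ?_ (ENNReal.tsum_le_tsum fun k => hsubsum k)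
    rw [tsum_fintype]
    exact (ENNReal.sum_lt_top.mpr fun k _ => ENNReal.ofReal_lt_top).ne
  -- lintegral of the sum is finite
  have hlin : ∀ n, ∫⁻ ω, ENNReal.ofReal (φ (X n ω)) ∂μ = ENNReal.ofReal (a n) := fun n =>
    (ofReal_integral_eq_lintegral_ofReal (hφint n) (ae_of_all _ fun ω => hφnonneg _)).symm
  have hmeas : ∀ n : ℕ, AEMeasurable (fun ω => ENNReal.ofReal (φ (X n ω))) μ := fun n =>
    (hφsm n).aemeasurable.ennreal_ofReal
  have hfin : ∫⁻ ω, ∑' n : ℕ, ENNReal.ofReal (φ (X n ω)) ∂μ ≠ ⊤ := by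
    rw [lintegral_tsum hmeas]
    simpa [hlin] using hsum
  have hae : ∀ᵐ ω ∂μ, ∑' n : ℕ, ENNReal.ofReal (φ (X n ω)) < ⊤ :=
    ae_lt_top' (AEMeasurable.ennreal_tsum hmeas) hfin
  filter_upwards [hae] with ω hω
  have h0 : Tendsto (fun n => ENNReal.ofReal (φ (X n ω))) atTop (nhds 0) :=
    ENNReal.tendsto_atTop_zero_of_tsum_ne_top hω.ne
  have h1 := (ENNReal.tendsto_toReal ENNReal.zero_ne_top).comp h0
  simp only [ENNReal.toReal_zero] at h1
  refine h1.congr fun n => ?_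
  simp [ENNReal.toReal_ofReal (hφnonneg (X n ω))]
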